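/- Let (q_t)_{t∈ℤ} be a stationary ergodic sequence of random elements with values in C(Θ, ℝ), the continuous real functions on a compact set Θ ⊂ ℝ^d with the sup norm, such that E[sup_{θ∈Θ} |q_0(θ)|] < ∞. Then (1/n) ∑_{t=1}^n q_t converges almost surely in C(Θ, ℝ) (i.e., uniformly in θ) to the deterministic function θ ↦ E[q_0(θ)]. -/

import Mathlib

set_option linter.unusedSectionVars false
set_option linter.unusedVariables false

open MeasureTheory Filter

open Topology

namespace UELLN

variable {Ω : Type*} [MeasurableSpace Ω] {μ : Measure Ω}

/-- `maxS T f n = max_{0 ≤ k ≤ n} S_k` where `S_k` is the Birkhoff sum. -/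
noncomputable def maxS (T : Ω → Ω) (f : Ω → ℝ) : ℕ → Ω → ℝ
  | 0 => 0
  | n+1 => fun ω => max 0 (f ω + maxS T f n (T ω))

lemma maxS_nonneg (T : Ω → Ω) (f : Ω → ℝ) (n : ℕ) (ω : Ω) : 0 ≤ maxS T f n ω := by
  cases n with
  | zero => simp [maxS]
  | succ n => exact le_max_left _ _

lemma maxS_mono (T : Ω → Ω) (f : Ω → ℝ) (n : ℕ) : ∀ ω, maxS T f n ω ≤ maxS T f (n+1) ω := by
  induction n with
  | zero => intro ω; exact maxS_nonneg T f 1 ω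
  | succ n ih =>
      intro ω
      exact max_le_max le_rfl (by gcongr; exact ih (T ω))

lemma birkhoffSum_le_maxS (T : Ω → Ω) (f : Ω → ℝ) (k : ℕ) :
    ∀ ω, birkhoffSum T f k ω ≤ maxS T f k ω := by
  induction k with
  | zero => intro ω; simp [maxS]
  | succ k ih =>
      intro ω
      rw [birkhoffSum_succ']
      exact le_max_of_le_right (by gcongr; exact ih (T ω))

lemma maxS_measurable {T : Ω → Ω} {f : Ω → ℝ} (hT : Measurable T) (hf : Measurable f) (n : ℕ) :
    Measurable (maxS T f n) := by
  induction n with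
  | zero => exact measurable_const
  | succ n ih => exact measurable_const.max (hf.add (ih.comp hT))

lemma maxS_integrable {T : Ω → Ω} {f : Ω → ℝ} (hT : MeasurePreserving T μ μ)
    (hTm : Measurable T) (hfm : Measurable f) (hf : Integrable f μ) (n : ℕ) :
    Integrable (maxS T f n) μ := by
  induction n with
  | zero => exact integrable_zero Ω ℝ μ
  | succ n ih =>
      have hcomp : Integrable (maxS T f n ∘ T) μ :=
        (hT.integrable_comp (ih.aestronglyMeasurable)).2 ih
      have : Integrable (fun ω => f ω + maxS T f n (T ω)) μ := hf.add hcomp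
      simpa [maxS, max_comm (0:ℝ)] using this.pos_part

/-- **Maximal ergodic theorem** (Garsia's proof). -/
lemma maximal_ergodic (hT : MeasurePreserving T μ μ) (hTm : Measurable T)
    {f : Ω → ℝ} (hfm : Measurable f) (hf : Integrable f μ) [IsFiniteMeasure μ] (n : ℕ) :
    0 ≤ ∫ ω in {ω | 0 < maxS T f n ω}, f ω ∂μ := by
  cases n with
  | zero => simp [maxS]
  | succ n =>
      set A : Set Ω := {ω | 0 < maxS T f (n+1) ω} with hA
      have hAmeas : MeasurableSet A := measurableSet_lt measurable_const (maxS_measurable hTm hfm (n+1))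
      have hM1 : Integrable (maxS T f (n+1)) μ := maxS_integrable hT hTm hfm hf (n+1)
      have hMT : Integrable (maxS T f (n+1) ∘ T) μ :=
        (hT.integrable_comp hM1.aestronglyMeasurable).2 hM1
      -- pointwise bound on A : maxS (n+1) ω - maxS (n+1) (T ω) ≤ f ω
      have key : ∀ ω ∈ A, maxS T f (n+1) ω - maxS T f (n+1) (T ω) ≤ f ω := by
        intro ω hω
        have h1 : maxS T f (n+1) ω = f ω + maxS T f n (T ω) := by
          have : (0:ℝ) < max 0 (f ω + maxS T f n (T ω)) := hω
          have h2 : (0:ℝ) ≤ f ω + maxS T f n (T ω) := by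
            by_contra h
            push_neg at h
            simp [max_eq_left h.le] at this
          simpa [maxS] using max_eq_right h2
        have h3 : maxS T f n (T ω) ≤ maxS T f (n+1) (T ω) := maxS_mono T f n (T ω)
        linarith
      have step1 : ∫ ω in A, (maxS T f (n+1) ω - maxS T f (n+1) (T ω)) ∂μ ≤ ∫ ω in A, f ω ∂μ := by
        apply setIntegral_mono_on (hM1.sub hMT).integrableOn hf.integrableOn hAmeas key
      have hAc : ∫ ω in A, maxS T f (n+1) ω ∂μ = ∫ ω, maxS T f (n+1) ω ∂μ := by
        rw [← integral_add_compl hAmeas hM1]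
        have : ∫ ω in Aᶜ, maxS T f (n+1) ω ∂μ = 0 := by
          apply setIntegral_eq_zero_of_forall_eq_zero
          intro ω hω
          have h1 := maxS_nonneg T f (n+1) ω
          have h2 : ¬ (0 < maxS T f (n+1) ω) := hω
          linarith [le_antisymm (not_lt.1 h2) h1]
        rw [this, add_zero]
      have hle : ∫ ω in A, maxS T f (n+1) (T ω) ∂μ ≤ ∫ ω, maxS T f (n+1) (T ω) ∂μ := by
        apply setIntegral_le_integral hMT
        exact Eventually.of_forall fun ω => maxS_nonneg T f (n+1) (T ω)
      have hTeq : ∫ ω, maxS T f (n+1) (T ω) ∂μ = ∫ ω, maxS T f (n+1) ω ∂μ := by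
        have h := integral_map (μ := μ) hTm.aemeasurable (f := maxS T f (n+1))
          (by rw [hT.map_eq]; exact hM1.aestronglyMeasurable)
        rw [hT.map_eq] at h
        exact h.symm
      have step2 : ∫ ω in A, (maxS T f (n+1) ω - maxS T f (n+1) (T ω)) ∂μ =
          ∫ ω in A, maxS T f (n+1) ω ∂μ - ∫ ω in A, maxS T f (n+1) (T ω) ∂μ :=
        integral_sub hM1.integrableOn hMT.integrableOn
      have : (0:ℝ) ≤ ∫ ω in A, (maxS T f (n+1) ω - maxS T f (n+1) (T ω)) ∂μ := by
        rw [step2, hAc]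
        have := hle.trans (le_of_eq hTeq)
        linarith
      linarith

lemma monotone_maxS_set (T : Ω → Ω) (f : Ω → ℝ) :
    Monotone (fun n => {ω | 0 < maxS T f n ω}) := by
  intro m n hmn
  have : ∀ ω, maxS T f m ω ≤ maxS T f n ω := by
    intro ω
    induction hmn with
    | refl => exact le_refl _
    | step h ih => exact le_trans ih (maxS_mono T f _ ω)
  intro ω hω
  exact lt_of_lt_of_le hω (this ω)

/-- Maximal ergodic theorem, union version. -/
lemma maximal_ergodic_iUnion (hT : MeasurePreserving T μ μ) (hTm : Measurable T)
    {f : Ω → ℝ} (hfm : Measurable f) (hf : Integrable f μ) [IsFiniteMeasure μ] :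
    0 ≤ ∫ ω in ⋃ n, {ω | 0 < maxS T f n ω}, f ω ∂μ := by
  have hmeas : ∀ n : ℕ, MeasurableSet {ω | 0 < maxS T f n ω} := fun n =>
    measurableSet_lt measurable_const (maxS_measurable hTm hfm n)
  have := tendsto_setIntegral_of_monotone hmeas (monotone_maxS_set T f) hf.integrableOn
  exact ge_of_tendsto this (Eventually.of_forall fun n => maximal_ergodic hT hTm hfm hf n)

lemma measurable_birkhoffSum {T : Ω → Ω} {f : Ω → ℝ} (hTm : Measurable T) (hfm : Measurable f)
    (n : ℕ) : Measurable (birkhoffSum T f n) :=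
  Finset.measurable_sum _ fun k _ => hfm.comp (hTm.iterate k)

lemma birkhoffSum_sub_const (T : Ω → Ω) (f : Ω → ℝ) (q : ℝ) (n : ℕ) (ω : Ω) :
    birkhoffSum T (fun ω => f ω - q) n ω = birkhoffSum T f n ω - n * q := by
  simp [birkhoffSum, Finset.sum_sub_distrib, nsmul_eq_mul]

/-- Key lemma: if `∫ f < b` then a.e. eventually `S_n f < b n`. -/
lemma ae_eventually_birkhoffSum_lt (hT : Ergodic T μ) [IsProbabilityMeasure μ]
    {f : Ω → ℝ} (hfm : Measurable f) (hf : Integrable f μ) {b : ℝ}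
    (hb : ∫ ω, f ω ∂μ < b) :
    ∀ᵐ ω ∂μ, ∀ᶠ n in atTop, birkhoffSum T f n ω < b * n := by
  have hTm : Measurable T := hT.toMeasurePreserving.measurable
  set E : Set Ω :=
    {ω | ∀ c : ℚ, (c:ℝ) < b → ∃ᶠ n in atTop, (c:ℝ) * n < birkhoffSum T f n ω} with hE
  have hSm : ∀ n, Measurable (birkhoffSum T f n) := measurable_birkhoffSum hTm hfm
  have hEmeas : MeasurableSet E := by
    have : E = ⋂ (c : ℚ), ⋂ (_ : (c:ℝ) < b), ⋂ (N : ℕ), ⋃ (n : ℕ), ⋃ (_ : N ≤ n),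
        {ω | (c:ℝ) * n < birkhoffSum T f n ω} := by
      ext ω
      simp only [hE, Set.mem_setOf_eq, Set.mem_iInter, Set.mem_iUnion, Set.mem_setOf_eq]
      refine forall_congr' fun c => imp_congr_right fun hc => ?_
      rw [frequently_atTop]
      exact ⟨fun hf N => let ⟨n, hn, hp⟩ := hf N; ⟨n, hn, hp⟩,
        fun hf N => let ⟨n, hn, hp⟩ := hf N; ⟨n, hn, hp⟩⟩
    rw [this]
    refine MeasurableSet.iInter fun c => MeasurableSet.iInter fun _ =>
      MeasurableSet.iInter fun N => MeasurableSet.iUnion fun n => MeasurableSet.iUnion fun _ =>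
      measurableSet_lt measurable_const (hSm n)
  have hEinv : T ⁻¹' E = E := by
    ext ω
    simp only [Set.mem_preimage, hE, Set.mem_setOf_eq]
    constructor
    · -- T ω ∈ E → ω ∈ E
      intro h c hc
      obtain ⟨c', hc1, hc2⟩ := exists_rat_btwn hc
      have freq := h c' hc2
      rw [frequently_atTop] at freq ⊢
      intro N
      obtain ⟨M₀, hM₀⟩ := exists_nat_gt (((c:ℝ) - f ω) / ((c':ℝ) - c))
      obtain ⟨m, hm, hmlt⟩ := freq (max N M₀)
      refine ⟨m + 1, le_trans (le_trans (le_max_left N M₀) hm) (Nat.le_succ m), ?_⟩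
      have hmM : (M₀ : ℝ) ≤ m := Nat.cast_le.2 (le_trans (le_max_right N M₀) hm)
      have hcc : (0:ℝ) < (c':ℝ) - c := by exact_mod_cast sub_pos.2 hc1
      have h1 : (c:ℝ) - f ω < ((c':ℝ) - c) * m := by
        have h0 := (div_lt_iff₀ hcc).1 hM₀
        nlinarith [h0, hmM, hcc]
      rw [birkhoffSum_succ']
      push_cast
      nlinarith [hmlt]
    · -- ω ∈ E → T ω ∈ E
      intro h c hc
      obtain ⟨c', hc1, hc2⟩ := exists_rat_btwn hc
      have freq := h c' hc2
      rw [frequently_atTop] at freq ⊢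
      intro N
      obtain ⟨M₀, hM₀⟩ := exists_nat_gt ((f ω - (c':ℝ)) / ((c':ℝ) - c))
      obtain ⟨n, hn, hnlt⟩ := freq (max (N + 1) (M₀ + 1))
      have hn1 : 1 ≤ n := le_trans (le_trans (Nat.le_add_left 1 N) (le_max_left _ _)) hn
      obtain ⟨m, rfl⟩ : ∃ m, n = m + 1 := ⟨n - 1, (Nat.succ_pred_eq_of_pos hn1).symm⟩
      refine ⟨m, by omega, ?_⟩
      have hmM : (M₀ : ℝ) ≤ m := by
        have : M₀ + 1 ≤ m + 1 := le_trans (le_max_right _ _) hn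
        exact_mod_cast Nat.le_of_succ_le_succ this
      have hcc : (0:ℝ) < (c':ℝ) - c := by exact_mod_cast sub_pos.2 hc1
      have h1 : f ω - (c':ℝ) < ((c':ℝ) - c) * m := by
        have h0 := (div_lt_iff₀ hcc).1 hM₀
        nlinarith [h0, hmM, hcc]
      rw [birkhoffSum_succ'] at hnlt
      push_cast at hnlt ⊢
      nlinarith [hnlt]
  rcases hT.ae_empty_or_univ hEmeas hEinv with h | h
  · -- μ E = 0 : a.e. ω ∉ E, extract eventual bound
    have h0 : μ E = 0 := by rwa [ae_eq_empty] at h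
    have : ∀ᵐ ω ∂μ, ω ∉ E := by
      rw [ae_iff]; simpa using h0
    filter_upwards [this] with ω hω
    simp only [hE, Set.mem_setOf_eq, not_forall, not_frequently] at hω
    obtain ⟨c, hc, hev⟩ := hω
    filter_upwards [hev, eventually_ge_atTop 1] with n hn h1
    have : (0:ℝ) < n := by exact_mod_cast h1
    have := not_lt.1 hn
    nlinarith
  · -- μ E = 1 : contradiction with the maximal ergodic theorem
    exfalso
    obtain ⟨q, hq1, hq2⟩ := exists_rat_btwn hb
    set g : Ω → ℝ := fun ω => f ω - q with hg
    have hgm : Measurable g := hfm.sub measurable_const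
    have hgi : Integrable g μ := hf.sub (integrable_const _)
    have hgint : ∫ ω, g ω ∂μ < 0 := by
      rw [hg]
      simp only []
      rw [integral_sub hf (integrable_const _), integral_const]
      simp only [measure_univ, probReal_univ, ENNReal.toReal_one, one_smul, smul_eq_mul]
      linarith
    set B : Set Ω := ⋃ n, {ω | 0 < maxS T g n ω} with hB
    have hEB : E ⊆ B := by
      intro ω hω
      have := hω q hq2
      rw [frequently_atTop] at this
      obtain ⟨n, hn1, hlt⟩ := this 1
      have hpos : 0 < birkhoffSum T g n ω := by
        rw [hg]
        rw [birkhoffSum_sub_const T f q n ω]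
        linarith [hlt]
      exact Set.mem_iUnion.2 ⟨n, lt_of_lt_of_le hpos (birkhoffSum_le_maxS T g n ω)⟩
    have hBU : μ Bᶜ = 0 := by
      have hEU : μ Eᶜ = 0 := ae_eq_univ.1 h
      exact measure_mono_null (Set.compl_subset_compl.2 hEB) hEU
    have hint : (0:ℝ) ≤ ∫ ω in B, g ω ∂μ :=
      maximal_ergodic_iUnion hT.toMeasurePreserving hTm hgm hgi
    rw [setIntegral_congr_set (ae_eq_univ.2 hBU), Measure.restrict_univ] at hint
    linarith


lemma birkhoffSum_neg' (T : Ω → Ω) (f : Ω → ℝ) (n : ℕ) (ω : Ω) :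
    birkhoffSum T (-f) n ω = -birkhoffSum T f n ω := by
  simp [birkhoffSum]

/-- Birkhoff's pointwise ergodic theorem, real valued, measurable version. -/
theorem scalar_birkhoff_meas (hT : Ergodic T μ) [IsProbabilityMeasure μ]
    {f : Ω → ℝ} (hfm : Measurable f) (hf : Integrable f μ) :
    ∀ᵐ ω ∂μ, Tendsto (fun n : ℕ => (n:ℝ)⁻¹ * birkhoffSum T f n ω) atTop
      (𝓝 (∫ ω, f ω ∂μ)) := by
  have upper : ∀ᵐ ω ∂μ, ∀ q : ℚ, ∫ ω, f ω ∂μ < q →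
      ∀ᶠ n in atTop, birkhoffSum T f n ω < q * n := by
    rw [ae_all_iff]
    intro q
    by_cases hq : ∫ ω, f ω ∂μ < q
    · exact (ae_eventually_birkhoffSum_lt hT hfm hf hq).mono fun ω h _ => h
    · exact Eventually.of_forall fun ω h => absurd h hq
  have lower : ∀ᵐ ω ∂μ, ∀ q : ℚ, ∫ ω, (-f) ω ∂μ < q →
      ∀ᶠ n in atTop, birkhoffSum T (-f) n ω < q * n := by
    rw [ae_all_iff]
    intro q
    by_cases hq : ∫ ω, (-f) ω ∂μ < q
    · exact (ae_eventually_birkhoffSum_lt hT hfm.neg hf.neg hq).mono fun ω h _ => h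
    · exact Eventually.of_forall fun ω h => absurd h hq
  filter_upwards [upper, lower] with ω hu hl
  rw [tendsto_order]
  constructor
  · intro a ha
    obtain ⟨q, hq1, hq2⟩ := exists_rat_btwn (neg_lt_neg ha)
    have hint : ∫ ω, (-f) ω ∂μ < q := by
      simp only [Pi.neg_apply, integral_neg]
      exact hq1
    filter_upwards [hl q hint, eventually_ge_atTop 1] with n hn h1
    have hn0 : (0:ℝ) < n := by exact_mod_cast h1
    have hSn : -birkhoffSum T f n ω < q * n := by
      rw [← birkhoffSum_neg' T f n ω]
      exact hn
    have key : a * n < birkhoffSum T f n ω := by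
      have : (q:ℝ) < -a := hq2
      nlinarith
    calc a = (n:ℝ)⁻¹ * (a * n) := by field_simp
    _ < (n:ℝ)⁻¹ * birkhoffSum T f n ω := by
        exact mul_lt_mul_of_pos_left key (inv_pos.2 hn0)
  · intro a ha
    obtain ⟨q, hq1, hq2⟩ := exists_rat_btwn ha
    filter_upwards [hu q hq1, eventually_ge_atTop 1] with n hn h1
    have hn0 : (0:ℝ) < n := by exact_mod_cast h1
    have key : birkhoffSum T f n ω < a * n := by nlinarith
    calc (n:ℝ)⁻¹ * birkhoffSum T f n ω < (n:ℝ)⁻¹ * (a * n) :=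
          mul_lt_mul_of_pos_left key (inv_pos.2 hn0)
    _ = a := by field_simp

/-- Birkhoff's pointwise ergodic theorem, real valued, integrable version. -/
theorem scalar_birkhoff (hT : Ergodic T μ) [IsProbabilityMeasure μ]
    {f : Ω → ℝ} (hf : Integrable f μ) :
    ∀ᵐ ω ∂μ, Tendsto (fun n : ℕ => (n:ℝ)⁻¹ * birkhoffSum T f n ω) atTop
      (𝓝 (∫ ω, f ω ∂μ)) := by
  set g := hf.1.mk f with hgdef
  have hgm : Measurable g := hf.1.stronglyMeasurable_mk.measurable
  have hfg : f =ᵐ[μ] g := hf.1.ae_eq_mk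
  have hg : Integrable g μ := hf.congr hfg
  have hiter : ∀ᵐ ω ∂μ, ∀ k : ℕ, f (T^[k] ω) = g (T^[k] ω) :=
    ae_all_iff.2 fun k =>
      (hT.toMeasurePreserving.iterate k).quasiMeasurePreserving.ae_eq_comp hfg
  filter_upwards [hiter, scalar_birkhoff_meas hT hgm hg] with ω h1 h2
  have hS : ∀ n, birkhoffSum T f n ω = birkhoffSum T g n ω := fun n =>
    Finset.sum_congr rfl fun k _ => h1 k
  have : (fun n : ℕ => (n:ℝ)⁻¹ * birkhoffSum T f n ω)
      = fun n : ℕ => (n:ℝ)⁻¹ * birkhoffSum T g n ω := funext fun n => by rw [hS n]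
  rw [this, integral_congr_ae hfg]
  exact h2


variable {E : Type*} [NormedAddCommGroup E] [NormedSpace ℝ E] [CompleteSpace E]

lemma birkhoffSum_add' (T : Ω → Ω) (f g : Ω → E) (n : ℕ) (ω : Ω) :
    birkhoffSum T (f + g) n ω = birkhoffSum T f n ω + birkhoffSum T g n ω := by
  simp [birkhoffSum, Finset.sum_add_distrib]

/-- Birkhoff's pointwise ergodic theorem for Banach-space-valued integrable functions. -/
theorem banach_birkhoff (hT : Ergodic T μ) [IsProbabilityMeasure μ]
    {f : Ω → E} (hf : Integrable f μ) :
    ∀ᵐ ω ∂μ, Tendsto (fun n : ℕ => (n:ℝ)⁻¹ • birkhoffSum T f n ω) atTop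
      (𝓝 (∫ ω, f ω ∂μ)) := by
  refine Integrable.induction (μ := μ)
    (P := fun f : Ω → E => ∀ᵐ ω ∂μ, Tendsto (fun n : ℕ => (n:ℝ)⁻¹ • birkhoffSum T f n ω) atTop
      (𝓝 (∫ ω, f ω ∂μ))) ?_ ?_ ?_ ?_ hf
  · -- indicators
    intro c s hs hμs
    set χ : Ω → ℝ := s.indicator (fun _ => (1:ℝ)) with hχ
    have hχi : Integrable χ μ := (integrable_const 1).indicator hs
    have hpt : ∀ x, s.indicator (fun _ => c) x = (χ x) • c := by
      intro x
      by_cases hx : x ∈ s <;> simp [hχ, Set.indicator_of_mem, Set.indicator_of_notMem, hx]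
    have hkey : ∀ n ω, birkhoffSum T (s.indicator fun _ => c) n ω
        = (birkhoffSum T χ n ω) • c := by
      intro n ω
      simp only [birkhoffSum]
      rw [Finset.sum_smul]
      exact Finset.sum_congr rfl fun k _ => hpt _
    filter_upwards [scalar_birkhoff hT hχi] with ω hω
    have := hω.smul_const c
    have heq : (fun n : ℕ => ((n:ℝ)⁻¹ * birkhoffSum T χ n ω) • c)
        = fun n : ℕ => (n:ℝ)⁻¹ • birkhoffSum T (s.indicator fun _ => c) n ω := by
      funext n
      rw [hkey, mul_smul]
    rw [heq] at this
    convert this using 2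
    rw [integral_indicator_const c hs]
    have : ∫ ω, χ ω ∂μ = (μ s).toReal := by
      rw [hχ, integral_indicator_const (1:ℝ) hs, smul_eq_mul, mul_one]
      rfl
    rw [this]
    rfl
  · -- additivity
    intro f g _ hfi hgi hPf hPg
    filter_upwards [hPf, hPg] with ω h1 h2
    have hint : ∫ ω, (f + g) ω ∂μ = (∫ ω, f ω ∂μ) + ∫ ω, g ω ∂μ := by
      simp only [Pi.add_apply]
      exact integral_add hfi hgi
    rw [hint]
    have heq : (fun n : ℕ => (n:ℝ)⁻¹ • birkhoffSum T (f + g) n ω)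
        = fun n : ℕ => (n:ℝ)⁻¹ • birkhoffSum T f n ω + (n:ℝ)⁻¹ • birkhoffSum T g n ω := by
      funext n
      rw [birkhoffSum_add', smul_add]
    rw [heq]
    exact h1.add h2
  · -- closedness in L¹
    refine IsSeqClosed.isClosed ?_
    intro F G hF hFG
    have hGi : Integrable (⇑G) μ := L1.integrable_coeFn G
    have hδeq : ∀ k, ∫ ω, ‖F k ω - G ω‖ ∂μ = ‖F k - G‖ := by
      intro k
      rw [L1.norm_eq_integral_norm (F k - G)]
      refine integral_congr_ae ?_
      filter_upwards [Lp.coeFn_sub (F k) G] with ω hω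
      rw [hω]
      simp
    have hδ : Tendsto (fun k => ∫ ω, ‖F k ω - G ω‖ ∂μ) atTop (𝓝 0) := by
      simp only [hδeq]
      exact tendsto_iff_norm_sub_tendsto_zero.1 hFG
    have hnormi : ∀ k, Integrable (fun ω => ‖F k ω - G ω‖) μ := fun k =>
      ((L1.integrable_coeFn (F k)).sub hGi).norm
    have hscalar : ∀ᵐ ω ∂μ, ∀ k, Tendsto
        (fun n : ℕ => (n:ℝ)⁻¹ * birkhoffSum T (fun ω => ‖F k ω - G ω‖) n ω) atTop
        (𝓝 (∫ ω, ‖F k ω - G ω‖ ∂μ)) :=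
      ae_all_iff.2 fun k => scalar_birkhoff hT (hnormi k)
    have hP : ∀ᵐ ω ∂μ, ∀ k, Tendsto (fun n : ℕ => (n:ℝ)⁻¹ • birkhoffSum T (⇑(F k)) n ω) atTop
        (𝓝 (∫ ω, F k ω ∂μ)) := ae_all_iff.2 hF
    filter_upwards [hscalar, hP] with ω h1 h2
    rw [Metric.tendsto_atTop]
    intro ε hε
    obtain ⟨k, hk⟩ := (hδ.eventually (gt_mem_nhds (show (0:ℝ) < ε/3 by linarith))).exists
    have hev1 : ∀ᶠ n : ℕ in atTop,
        (n:ℝ)⁻¹ * birkhoffSum T (fun ω => ‖F k ω - G ω‖) n ω < ε/3 :=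
      (h1 k).eventually (gt_mem_nhds hk)
    have hev2 : ∀ᶠ n : ℕ in atTop,
        dist ((n:ℝ)⁻¹ • birkhoffSum T (⇑(F k)) n ω) (∫ ω, F k ω ∂μ) < ε/3 :=
      (h2 k).eventually (Metric.ball_mem_nhds _ (by linarith))
    obtain ⟨N, hN⟩ := (hev1.and hev2).exists_forall_of_atTop
    refine ⟨N, fun n hn => ?_⟩
    obtain ⟨hn1, hn2⟩ := hN n hn
    have hbd : dist ((n:ℝ)⁻¹ • birkhoffSum T (⇑G) n ω) ((n:ℝ)⁻¹ • birkhoffSum T (⇑(F k)) n ω)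
        ≤ (n:ℝ)⁻¹ * birkhoffSum T (fun ω => ‖F k ω - G ω‖) n ω := by
      rw [dist_eq_norm, ← smul_sub, norm_smul]
      have h0 : ‖(n:ℝ)⁻¹‖ = (n:ℝ)⁻¹ := by
        rw [Real.norm_eq_abs, abs_of_nonneg (by positivity)]
      rw [h0]
      gcongr
      have hsub : birkhoffSum T (⇑G) n ω - birkhoffSum T (⇑(F k)) n ω
          = ∑ i ∈ Finset.range n, (G (T^[i] ω) - F k (T^[i] ω)) := by
        simp [birkhoffSum, Finset.sum_sub_distrib]
      rw [hsub]
      calc ‖∑ i ∈ Finset.range n, (G (T^[i] ω) - F k (T^[i] ω))‖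
          ≤ ∑ i ∈ Finset.range n, ‖G (T^[i] ω) - F k (T^[i] ω)‖ := norm_sum_le _ _
      _ = birkhoffSum T (fun ω => ‖F k ω - G ω‖) n ω := by
          refine Finset.sum_congr rfl fun i _ => ?_
          rw [norm_sub_rev]
    have hbd2 : dist (∫ ω, F k ω ∂μ) (∫ ω, G ω ∂μ) ≤ ∫ ω, ‖F k ω - G ω‖ ∂μ := by
      rw [dist_eq_norm, ← integral_sub (L1.integrable_coeFn (F k)) hGi]
      exact norm_integral_le_integral_norm _
    calc dist ((n:ℝ)⁻¹ • birkhoffSum T (⇑G) n ω) (∫ ω, G ω ∂μ)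
        ≤ dist ((n:ℝ)⁻¹ • birkhoffSum T (⇑G) n ω) ((n:ℝ)⁻¹ • birkhoffSum T (⇑(F k)) n ω)
          + dist ((n:ℝ)⁻¹ • birkhoffSum T (⇑(F k)) n ω) (∫ ω, F k ω ∂μ)
          + dist (∫ ω, F k ω ∂μ) (∫ ω, G ω ∂μ) := dist_triangle4 _ _ _ _
    _ < ε/3 + ε/3 + ε/3 := by
        refine add_lt_add_of_lt_of_le (add_lt_add_of_le_of_lt (le_trans hbd hn1.le) hn2) ?_
        · exact le_trans hbd2 hk.le
    _ = ε := by ring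
  · -- a.e. invariance
    intro f g hfg hfi hPf
    have hiter : ∀ᵐ ω ∂μ, ∀ k : ℕ, f (T^[k] ω) = g (T^[k] ω) :=
      ae_all_iff.2 fun k =>
        (hT.toMeasurePreserving.iterate k).quasiMeasurePreserving.ae_eq_comp hfg
    filter_upwards [hiter, hPf] with ω h1 h2
    have hS : ∀ n, birkhoffSum T g n ω = birkhoffSum T f n ω := fun n =>
      (Finset.sum_congr rfl fun k _ => (h1 k).symm)
    have heq : (fun n : ℕ => (n:ℝ)⁻¹ • birkhoffSum T g n ω)
        = fun n : ℕ => (n:ℝ)⁻¹ • birkhoffSum T f n ω := funext fun n => by rw [hS n]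
    rw [heq, ← integral_congr_ae hfg]
    exact h2

end UELLN



/-- Uniform strong law of large numbers (ergodic theorem in `C(Θ, ℝ)`): if
`q_t = q_0 ∘ T^t` is a stationary ergodic sequence of random continuous functions on a
compact set `Θ ⊆ ℝ^d` with `E[sup_θ |q_0(θ)|] < ∞`, then almost surely the Cesàro means
`(1/n) ∑_{t<n} q_t` converge uniformly in `θ` to the deterministic function
`θ ↦ E[q_0(θ)]`. -/
theorem uniform_ergodic_lln {Ω : Type*} [MeasurableSpace Ω]
    (μ : Measure Ω) [IsProbabilityMeasure μ] {d : ℕ}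
    (Θ : Set (Fin d → ℝ)) (hΘ : IsCompact Θ) [CompactSpace Θ]
    (T : Ω → Ω) (hT : Ergodic T μ)
    (q0 : Ω → C(Θ, ℝ)) (hq0 : Integrable q0 μ) :
    ∀ᵐ ω ∂μ, Tendsto (fun n : ℕ =>
        ⨆ θ : Θ, |(n : ℝ)⁻¹ * (∑ t ∈ Finset.range n, q0 (T^[t] ω) θ) -
          ∫ ω', q0 ω' θ ∂μ|) atTop (nhds 0) := by
  filter_upwards [UELLN.banach_birkhoff hT hq0] with ω hω
  have h2 : Tendsto (fun n : ℕ =>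
      ‖(n:ℝ)⁻¹ • birkhoffSum T q0 n ω - ∫ ω', q0 ω' ∂μ‖) atTop (𝓝 0) :=
    tendsto_iff_norm_sub_tendsto_zero.1 hω
  have heq : (fun n : ℕ => ⨆ θ : Θ, |(n : ℝ)⁻¹ * (∑ t ∈ Finset.range n, q0 (T^[t] ω) θ) -
      ∫ ω', q0 ω' θ ∂μ|)
      = fun n : ℕ => ‖(n:ℝ)⁻¹ • birkhoffSum T q0 n ω - ∫ ω', q0 ω' ∂μ‖ := by
    funext n
    rw [ContinuousMap.norm_eq_iSup_norm]
    refine congrArg _ (funext fun θ => ?_)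
    rw [ContinuousMap.sub_apply, ContinuousMap.smul_apply, ContinuousMap.integral_apply hq0,
      Real.norm_eq_abs]
    congr 2
    · rw [smul_eq_mul]
      congr 1
      show _ = (birkhoffSum T q0 n ω) θ
      rw [birkhoffSum]
      exact (ContinuousMap.sum_apply _ _ _).symm
  rw [heq]
  exact h2
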